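/- Let d ≥ 2 be an integer and 0 < p < 1. For each n : ℕ let f(n) be the infimum, over all PPT POVM elements E on the n-copy space, of Re(p · Tr(E · σ_d^{⊗n}) + (1−p) · Tr((1 − E) · α_d^{⊗n})). Then −(1/n) · log(f(n)) tends to log((d+1)/(d−1)) as n → ∞; i.e. the PPT (and hence LOCC) Chernoff distance between σ_d and α_d is log((d+1)/(d−1)). -/

import Mathlib

open Matrix Finset
open scoped BigOperators Kronecker ComplexOrder

noncomputable section

/-- The flip (swap) operator on `ℂ^d ⊗ ℂ^d`. -/
def Flip (d : ℕ) : Matrix (Fin d × Fin d) (Fin d × Fin d) ℂ :=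
  Matrix.of fun p q => if p.1 = q.2 ∧ p.2 = q.1 then 1 else 0

/-- Projection onto the symmetric subspace, `Π_s = (1 + F)/2`. -/
def projSym (d : ℕ) : Matrix (Fin d × Fin d) (Fin d × Fin d) ℂ :=
  (2 : ℂ)⁻¹ • (1 + Flip d)

/-- Projection onto the antisymmetric subspace, `Π_a = (1 - F)/2`. -/
def projAsym (d : ℕ) : Matrix (Fin d × Fin d) (Fin d × Fin d) ℂ :=
  (2 : ℂ)⁻¹ • (1 - Flip d)

/-- The symmetric Werner state `σ_d = (2/(d(d+1))) • Π_s`. -/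
def wernerSym (d : ℕ) : Matrix (Fin d × Fin d) (Fin d × Fin d) ℂ :=
  (2 / ((d : ℂ) * ((d : ℂ) + 1))) • projSym d

/-- The antisymmetric Werner state `α_d = (2/(d(d-1))) • Π_a`. -/
def wernerAsym (d : ℕ) : Matrix (Fin d × Fin d) (Fin d × Fin d) ℂ :=
  (2 / ((d : ℂ) * ((d : ℂ) - 1))) • projAsym d

/-- The POVM element `G_d`: diagonal, with `(i,j),(i,j)` entry `1` iff `i ≠ j`. -/
def Gmat (d : ℕ) : Matrix (Fin d × Fin d) (Fin d × Fin d) ℂ :=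
  Matrix.diagonal fun p => if p.1 ≠ p.2 then 1 else 0

/-- `n`-fold tensor power of a matrix on `ℂ^d ⊗ ℂ^d`. -/
def tpow {d : ℕ} (n : ℕ) (X : Matrix (Fin d × Fin d) (Fin d × Fin d) ℂ) :
    Matrix (Fin n → Fin d × Fin d) (Fin n → Fin d × Fin d) ℂ :=
  Matrix.of fun f g => ∏ m, X (f m) (g m)

/-- The twirled single-copy POVM element `M_d = ((d-1)/(d+1)) • Π_s + Π_a`. -/
def MdMat (d : ℕ) : Matrix (Fin d × Fin d) (Fin d × Fin d) ℂ :=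
  (((d : ℂ) - 1) / ((d : ℂ) + 1)) • projSym d + projAsym d

/-- `A_k`: sum over all `k`-element subsets `S` of the copies of the tensor product with
`Π_a` on copies in `S` and `Π_s` elsewhere. -/
def Amat (d n k : ℕ) : Matrix (Fin n → Fin d × Fin d) (Fin n → Fin d × Fin d) ℂ :=
  ∑ S ∈ Finset.powersetCard k (Finset.univ : Finset (Fin n)),
    Matrix.of fun f g => ∏ m, (if m ∈ S then projAsym d else projSym d) (f m) (g m)

/-- Partial transpose on `ℂ^d ⊗ ℂ^d`. -/
def pt {d : ℕ} (X : Matrix (Fin d × Fin d) (Fin d × Fin d) ℂ) :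
    Matrix (Fin d × Fin d) (Fin d × Fin d) ℂ :=
  Matrix.of fun p q => X (p.1, q.2) (q.1, p.2)

/-- The maximally entangled state `Φ_d`. -/
def Phi (d : ℕ) : Matrix (Fin d × Fin d) (Fin d × Fin d) ℂ :=
  Matrix.of fun p q => if p.1 = p.2 ∧ q.1 = q.2 then ((d : ℂ))⁻¹ else 0

/-- `n`-copy partial transpose. -/
def ptN {d n : ℕ} (Y : Matrix (Fin n → Fin d × Fin d) (Fin n → Fin d × Fin d) ℂ) :
    Matrix (Fin n → Fin d × Fin d) (Fin n → Fin d × Fin d) ℂ :=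
  Matrix.of fun f g => Y (fun m => ((f m).1, (g m).2)) (fun m => ((g m).1, (f m).2))

/-- `T_l`: sum over all `l`-element subsets `S` of the copies of the tensor product with
`Φ_d` on copies in `S` and `1 - Φ_d` elsewhere. -/
def Tmat (d n l : ℕ) : Matrix (Fin n → Fin d × Fin d) (Fin n → Fin d × Fin d) ℂ :=
  ∑ S ∈ Finset.powersetCard l (Finset.univ : Finset (Fin n)),
    Matrix.of fun f g => ∏ m, (if m ∈ S then Phi d else (1 - Phi d)) (f m) (g m)

/-- The matrix `Q` of the linear program: `Q l k = Σ_{j=0}^{min(l,k)}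
(n−l choose k−j)(l choose j)(1−d)^j (1+d)^{l−j}`. -/
def Qmat (n : ℕ) (d : ℝ) (l k : ℕ) : ℝ :=
  ∑ j ∈ Finset.range (min l k + 1),
    ((n - l).choose (k - j) : ℝ) * (l.choose j : ℝ) * (1 - d) ^ j * (1 + d) ^ (l - j)

/-- A PPT POVM element on the `n`-copy space: `E`, `1 - E`, `E^Γ`, `(1-E)^Γ` all PSD. -/
def IsPPTPovmElem {d n : ℕ}
    (E : Matrix (Fin n → Fin d × Fin d) (Fin n → Fin d × Fin d) ℂ) : Prop :=
  E.PosSemidef ∧ (1 - E).PosSemidef ∧ (ptN E).PosSemidef ∧ (ptN (1 - E)).PosSemidef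

/-- Error probability for discriminating `σ_d^{⊗n}` (prior `p`) from `α_d^{⊗n}`
(prior `1-p`) with the two-outcome POVM `{E, 1 - E}`. -/
def errProb (d n : ℕ) (p : ℝ)
    (E : Matrix (Fin n → Fin d × Fin d) (Fin n → Fin d × Fin d) ℂ) : ℝ :=
  ((p : ℂ) * (E * tpow n (wernerSym d)).trace
    + (1 - (p : ℂ)) * ((1 - E) * tpow n (wernerAsym d)).trace).re

/-- Separability of a bipartite matrix. -/
def IsSep {I J : Type*} [Fintype I] [Fintype J]
    (W : Matrix (I × J) (I × J) ℂ) : Prop :=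
  ∃ (m : ℕ) (A : Fin m → Matrix I I ℂ) (B : Fin m → Matrix J J ℂ),
    (∀ i, (A i).PosSemidef) ∧ (∀ i, (B i).PosSemidef) ∧ W = ∑ i, A i ⊗ₖ B i

/-- Trace norm `‖X‖₁ = Tr √(Xᴴ X)`. -/
def traceNorm {ι : Type*} [Fintype ι] [DecidableEq ι] (X : Matrix ι ι ℂ) : ℝ :=
  ((Matrix.posSemidef_conjTranspose_mul_self X).1.eigenvectorUnitary.1 *
    Matrix.diagonal ((fun x : ℝ => (x : ℂ)) ∘ (√·) ∘ (Matrix.posSemidef_conjTranspose_mul_self X).1.eigenvalues) *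
    (star (Matrix.posSemidef_conjTranspose_mul_self X).1.eigenvectorUnitary :
      Matrix ι ι ℂ)).trace.re

/-- Frobenius (Hilbert–Schmidt) norm `‖X‖₂ = √(Tr (Xᴴ X))`. -/
def frobNorm {ι : Type*} [Fintype ι] (X : Matrix ι ι ℂ) : ℝ :=
  Real.sqrt ((Xᴴ * X).trace.re)
namespace ChernoffAux

open Matrix Finset
open scoped ComplexOrder

variable {d n : ℕ}

/-- elementwise tensor product of a family of matrices -/
def pm (A : Fin n → Matrix (Fin d × Fin d) (Fin d × Fin d) ℂ) :
    Matrix (Fin n → Fin d × Fin d) (Fin n → Fin d × Fin d) ℂ :=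
  Matrix.of fun f g => ∏ m, A m (f m) (g m)

lemma pm_apply (A : Fin n → Matrix (Fin d × Fin d) (Fin d × Fin d) ℂ) (f g) :
    pm A f g = ∏ m, A m (f m) (g m) := rfl

lemma tpow_eq_pm (X : Matrix (Fin d × Fin d) (Fin d × Fin d) ℂ) :
    tpow n X = pm (fun _ => X) := rfl

lemma pm_conjTranspose (A : Fin n → Matrix (Fin d × Fin d) (Fin d × Fin d) ℂ) :
    (pm A)ᴴ = pm (fun m => (A m)ᴴ) := by
  ext f g
  simp [pm, conjTranspose_apply, map_prod]

lemma pm_mul (A B : Fin n → Matrix (Fin d × Fin d) (Fin d × Fin d) ℂ) :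
    pm A * pm B = pm (fun m => A m * B m) := by
  ext f g
  simp only [pm, mul_apply, of_apply]
  rw [Finset.prod_univ_sum]
  simp [Finset.prod_mul_distrib]

lemma pm_trace (A : Fin n → Matrix (Fin d × Fin d) (Fin d × Fin d) ℂ) :
    (pm A).trace = ∏ m, (A m).trace := by
  simp only [Matrix.trace, Matrix.diag_apply, pm, of_apply]
  rw [Finset.prod_univ_sum]
  simp

lemma pm_one : pm (fun _ : Fin n => (1 : Matrix (Fin d × Fin d) (Fin d × Fin d) ℂ)) = 1 := by
  ext f g
  simp only [pm, of_apply, Matrix.one_apply]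
  rw [Finset.prod_boole]
  simp [funext_iff]

lemma psd_iff_ct {ι : Type*} [Fintype ι] {A : Matrix ι ι ℂ} :
    A.PosSemidef ↔ ∃ B : Matrix ι ι ℂ, A = Bᴴ * B := by
  classical
  constructor
  · intro h
    open scoped MatrixOrder in
    exact CStarAlgebra.nonneg_iff_eq_star_mul_self.mp h.nonneg
  · rintro ⟨B, rfl⟩
    exact posSemidef_conjTranspose_mul_self B

lemma pm_psd {A : Fin n → Matrix (Fin d × Fin d) (Fin d × Fin d) ℂ}
    (h : ∀ m, (A m).PosSemidef) : (pm A).PosSemidef := by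
  choose C hC using fun m => psd_iff_ct.mp (h m)
  have : pm A = (pm C)ᴴ * pm C := by
    rw [pm_conjTranspose, pm_mul]
    exact congrArg pm (funext fun m => hC m)
  rw [this]
  exact Matrix.posSemidef_conjTranspose_mul_self _

lemma smul_psd {ι : Type*} [Fintype ι] {P : Matrix ι ι ℂ} {r : ℝ} (hr : 0 ≤ r)
    (hP : P.PosSemidef) : ((r : ℂ) • P).PosSemidef := by
  constructor
  · unfold Matrix.IsHermitian
    rw [conjTranspose_smul, hP.1]
    congr 1
    simp [Complex.star_def, Complex.conj_ofReal]
  · exact (hP.smul (Complex.zero_le_real.mpr hr)).2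

lemma psd_of_proj {ι : Type*} [Fintype ι] {P : Matrix ι ι ℂ} (h1 : Pᴴ = P) (h2 : P * P = P) :
    P.PosSemidef :=
  psd_iff_ct.mpr ⟨P, by rw [h1, h2]⟩

lemma sum_psd {ι κ : Type*} [Fintype ι] {s : Finset κ} {A : κ → Matrix ι ι ℂ}
    (h : ∀ k ∈ s, (A k).PosSemidef) : (∑ k ∈ s, A k).PosSemidef := by
  classical
  induction s using Finset.induction_on with
  | empty => simpa using Matrix.PosSemidef.zero
  | insert a s hx ih =>
    rw [Finset.sum_insert hx]
    exact (h _ (Finset.mem_insert_self _ _)).add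
      (ih fun k hk => h k (Finset.mem_insert_of_mem hk))

lemma trace_mul_psd_re_nonneg {ι : Type*} [Fintype ι] [DecidableEq ι] {P Q : Matrix ι ι ℂ}
    (hP : P.PosSemidef) (hQ : Q.PosSemidef) : 0 ≤ ((P * Q).trace).re := by
  obtain ⟨A, rfl⟩ := psd_iff_ct.mp hP
  obtain ⟨B, rfl⟩ := psd_iff_ct.mp hQ
  have h1 : Aᴴ * A * (Bᴴ * B) = Aᴴ * (A * Bᴴ * B) := by
    simp only [Matrix.mul_assoc]
  have h2 : ((Aᴴ * A * (Bᴴ * B)).trace) = ((B * Aᴴ)ᴴ * (B * Aᴴ)).trace := by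
    rw [h1, Matrix.trace_mul_comm]
    congr 1
    rw [conjTranspose_mul, conjTranspose_conjTranspose]
    simp only [Matrix.mul_assoc]
  rw [h2]
  set C := B * Aᴴ
  have h3 : (Cᴴ * C).trace = ∑ i, ∑ j, star (C j i) * C j i := by
    simp [Matrix.trace, Matrix.diag_apply, mul_apply, conjTranspose_apply]
  rw [h3, Complex.re_sum]
  apply Finset.sum_nonneg
  intro i _
  rw [Complex.re_sum]
  apply Finset.sum_nonneg
  intro j _
  rw [Complex.star_def, ← Complex.normSq_eq_conj_mul_self]
  simp [Complex.normSq_nonneg]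

lemma one_sub_tpow_psd {M : Matrix (Fin d × Fin d) (Fin d × Fin d) ℂ}
    (h0 : M.PosSemidef) (h1 : ((1 : Matrix (Fin d × Fin d) (Fin d × Fin d) ℂ) - M).PosSemidef) :
    ((1 : Matrix (Fin n → Fin d × Fin d) (Fin n → Fin d × Fin d) ℂ) - tpow n M).PosSemidef := by
  set P : ℕ → Matrix (Fin n → Fin d × Fin d) (Fin n → Fin d × Fin d) ℂ :=
    fun k => pm (fun m => if (m : ℕ) < k then M else 1) with hP
  have hP0 : P 0 = 1 := by
    rw [hP]
    simpa using pm_one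
  have hPn : P n = tpow n M := by
    rw [hP, tpow_eq_pm]
    exact congrArg pm (funext fun m => by simp [m.isLt])
  have htel : (1 : Matrix (Fin n → Fin d × Fin d) (Fin n → Fin d × Fin d) ℂ) - tpow n M
      = ∑ k ∈ Finset.range n, (P k - P (k + 1)) := by
    rw [Finset.sum_range_sub' P n, hP0, hPn]
  rw [htel]
  apply sum_psd
  intro k hk
  have hkn : k < n := Finset.mem_range.mp hk
  have hdiff : P k - P (k + 1)
      = pm (fun m => if (m : ℕ) < k then M else if (m : ℕ) = k then 1 - M else 1) := by
    ext f g
    set t : Fin n := ⟨k, hkn⟩ with ht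
    have hmem : t ∈ (Finset.univ : Finset (Fin n)) := Finset.mem_univ t
    simp only [hP, Matrix.sub_apply, pm_apply]
    rw [← Finset.mul_prod_erase _ _ hmem, ← Finset.mul_prod_erase _ _ hmem,
      ← Finset.mul_prod_erase _ _ hmem]
    have hprod : ∀ (m : Fin n), m ∈ Finset.univ.erase t →
        (if (m : ℕ) < k then M else (1 : Matrix (Fin d × Fin d) (Fin d × Fin d) ℂ)) (f m) (g m)
        = (if (m : ℕ) < k + 1 then M else 1) (f m) (g m) ∧
        (if (m : ℕ) < k then M else (1 : Matrix (Fin d × Fin d) (Fin d × Fin d) ℂ)) (f m) (g m)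
        = (if (m : ℕ) < k then M else if (m : ℕ) = k then 1 - M else 1) (f m) (g m) := by
      intro m hm
      have hne : (m : ℕ) ≠ k := by
        intro hc
        exact (Finset.ne_of_mem_erase hm) (Fin.ext hc)
      have hiff : ((m : ℕ) < k + 1) ↔ ((m : ℕ) < k) := by omega
      constructor
      · simp only [hiff]
      · by_cases h : (m : ℕ) < k <;> simp [h, hne]
    have e1 : ∏ m ∈ Finset.univ.erase t,
        (if (m : ℕ) < k + 1 then M else (1 : Matrix (Fin d × Fin d) (Fin d × Fin d) ℂ)) (f m) (g m)
        = ∏ m ∈ Finset.univ.erase t, (if (m : ℕ) < k then M else 1) (f m) (g m) :=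
      Finset.prod_congr rfl (fun m hm => ((hprod m hm).1).symm)
    have e2 : ∏ m ∈ Finset.univ.erase t,
        (if (m : ℕ) < k then M
          else if (m : ℕ) = k then 1 - M else (1 : Matrix (Fin d × Fin d) (Fin d × Fin d) ℂ)) (f m) (g m)
        = ∏ m ∈ Finset.univ.erase t, (if (m : ℕ) < k then M else 1) (f m) (g m) :=
      Finset.prod_congr rfl (fun m hm => ((hprod m hm).2).symm)
    rw [e1, e2]
    have htk : ¬ ((t : ℕ) < k) := by simp [ht]
    have htk2 : ((t : ℕ) < k + 1) := by simp [ht]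
    have htk3 : ((t : ℕ) = k) := rfl
    simp only [htk, htk2, htk3, if_true, if_false, if_pos, Matrix.sub_apply]
    simp only [lt_irrefl, if_false, Nat.lt_succ_self, if_true, Matrix.sub_apply]
    ring
  rw [hdiff]
  apply pm_psd
  intro m
  by_cases h : (m : ℕ) < k
  · simp [h, h0]
  · by_cases h2 : (m : ℕ) = k
    · simp [h, h2, h1]
    · simp [h, h2, Matrix.PosSemidef.one]

lemma pt_add (X Y : Matrix (Fin d × Fin d) (Fin d × Fin d) ℂ) :
    pt (X + Y) = pt X + pt Y := by
  ext p q
  simp [pt]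

lemma pt_smul (c : ℂ) (X : Matrix (Fin d × Fin d) (Fin d × Fin d) ℂ) :
    pt (c • X) = c • pt X := by
  ext p q
  simp [pt]

lemma pt_sub (X Y : Matrix (Fin d × Fin d) (Fin d × Fin d) ℂ) :
    pt (X - Y) = pt X - pt Y := by
  ext p q
  simp [pt]

lemma pt_one : pt (1 : Matrix (Fin d × Fin d) (Fin d × Fin d) ℂ) = 1 := by
  ext p q
  simp only [pt, of_apply, Matrix.one_apply, Prod.ext_iff]
  by_cases h1 : p.1 = q.1 <;> by_cases h2 : p.2 = q.2 <;> simp [h1, h2, eq_comm]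

lemma pt_flip (hd : d ≠ 0) : pt (Flip d) = (d : ℂ) • Phi d := by
  have hdc : (d : ℂ) ≠ 0 := Nat.cast_ne_zero.mpr hd
  ext p q
  simp only [pt, Flip, Phi, of_apply, Matrix.smul_apply, smul_eq_mul]
  by_cases h1 : p.1 = p.2 <;> by_cases h2 : q.1 = q.2 <;>
    simp [h1, h2, eq_comm, mul_inv_cancel₀ hdc]

lemma ptN_pm (A : Fin n → Matrix (Fin d × Fin d) (Fin d × Fin d) ℂ) :
    ptN (pm A) = pm (fun m => pt (A m)) := rfl

lemma ptN_tpow (X : Matrix (Fin d × Fin d) (Fin d × Fin d) ℂ) :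
    ptN (tpow n X) = tpow n (pt X) := rfl

lemma ptN_one : ptN (1 : Matrix (Fin n → Fin d × Fin d) (Fin n → Fin d × Fin d) ℂ) = 1 := by
  rw [← pm_one (d := d) (n := n), ptN_pm]
  have : (fun m : Fin n => pt (1 : Matrix (Fin d × Fin d) (Fin d × Fin d) ℂ))
      = fun _ : Fin n => (1 : Matrix (Fin d × Fin d) (Fin d × Fin d) ℂ) := by
    funext m
    exact pt_one
  rw [this, pm_one]

lemma ptN_sub (X Y : Matrix (Fin n → Fin d × Fin d) (Fin n → Fin d × Fin d) ℂ) :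
    ptN (X - Y) = ptN X - ptN Y := by
  ext f g
  simp [ptN]

lemma trace_ptN_mul (X Y : Matrix (Fin n → Fin d × Fin d) (Fin n → Fin d × Fin d) ℂ) :
    (ptN X * ptN Y).trace = (X * Y).trace := by
  have key : ∀ Z W : Matrix (Fin n → Fin d × Fin d) (Fin n → Fin d × Fin d) ℂ,
      (Z * W).trace = ∑ fg : (Fin n → Fin d × Fin d) × (Fin n → Fin d × Fin d),
        Z fg.1 fg.2 * W fg.2 fg.1 := by
    intro Z W
    simp [Matrix.trace, Matrix.diag_apply, mul_apply, Fintype.sum_prod_type]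
  rw [key, key]
  set e : ((Fin n → Fin d × Fin d) × (Fin n → Fin d × Fin d)) ≃
      ((Fin n → Fin d × Fin d) × (Fin n → Fin d × Fin d)) :=
    ⟨fun fg => (fun m => ((fg.1 m).1, (fg.2 m).2), fun m => ((fg.2 m).1, (fg.1 m).2)),
     fun fg => (fun m => ((fg.1 m).1, (fg.2 m).2), fun m => ((fg.2 m).1, (fg.1 m).2)),
     fun fg => by simp, fun fg => by simp⟩ with he
  exact Fintype.sum_equiv e _ _ (fun fg => rfl)

lemma flip_mul_flip : Flip d * Flip d = 1 := by
  ext p r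
  simp only [Flip, mul_apply, of_apply, Matrix.one_apply]
  rw [Finset.sum_eq_single (p.2, p.1)]
  · by_cases h1 : p.1 = r.1 <;> by_cases h2 : p.2 = r.2 <;>
      simp [h1, h2, Prod.ext_iff, eq_comm]
  · intro q _ hq
    have : ¬ (p.1 = q.2 ∧ p.2 = q.1) := by
      intro hc
      exact hq (Prod.ext hc.2.symm hc.1.symm)
    simp [this]
  · simp

lemma flip_conjTranspose : (Flip d)ᴴ = Flip d := by
  ext p q
  simp only [Flip, conjTranspose_apply, of_apply]
  by_cases h : q.1 = p.2 ∧ q.2 = p.1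
  · simp [h.1, h.2]
  · have h2 : ¬ (p.1 = q.2 ∧ p.2 = q.1) := fun hc => h ⟨hc.2.symm, hc.1.symm⟩
    simp [h, h2]

lemma trace_flip : (Flip d).trace = (d : ℂ) := by
  simp only [Matrix.trace, Matrix.diag_apply, Flip, of_apply]
  rw [Fintype.sum_prod_type]
  simp [eq_comm, Finset.sum_ite_eq]

lemma trace_one' : (1 : Matrix (Fin d × Fin d) (Fin d × Fin d) ℂ).trace = (d : ℂ) * d := by
  rw [Matrix.trace_one]
  simp [Fintype.card_prod]

lemma phi_conjTranspose : (Phi d)ᴴ = Phi d := by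
  ext p q
  simp only [Phi, conjTranspose_apply, of_apply]
  by_cases h1 : p.1 = p.2 <;> by_cases h2 : q.1 = q.2 <;>
    simp [h1, h2, and_comm, Complex.conj_inv]

lemma phi_mul_phi (hd : d ≠ 0) : Phi d * Phi d = Phi d := by
  have hdc : (d : ℂ) ≠ 0 := Nat.cast_ne_zero.mpr hd
  ext p q
  simp only [Phi, mul_apply, of_apply]
  by_cases h1 : p.1 = p.2 <;> by_cases h2 : q.1 = q.2 <;>
    simp [h1, h2, Fintype.sum_prod_type, Finset.sum_ite_eq, hdc, Finset.mul_sum]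

lemma cast_ne_facts (hd : 2 ≤ d) :
    ((d : ℂ) ≠ 0) ∧ ((d : ℂ) + 1 ≠ 0) ∧ ((d : ℂ) - 1 ≠ 0) := by
  refine ⟨Nat.cast_ne_zero.mpr (by omega), ?_, ?_⟩
  · have : (d : ℂ) + 1 = ((d + 1 : ℕ) : ℂ) := by push_cast; ring
    rw [this]
    exact Nat.cast_ne_zero.mpr (by omega)
  · have : (d : ℂ) - 1 = ((d - 1 : ℕ) : ℂ) := by
      have h1 : 1 ≤ d := by omega
      push_cast [Nat.cast_sub h1]
      ring
    rw [this]
    exact Nat.cast_ne_zero.mpr (by omega)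

lemma projSym_comb : projSym d = (2⁻¹ : ℂ) • 1 + (2⁻¹ : ℂ) • Flip d := by
  rw [projSym]; module

lemma projAsym_comb : projAsym d = (2⁻¹ : ℂ) • 1 + (-2⁻¹ : ℂ) • Flip d := by
  rw [projAsym]; module

lemma mul_combo (a b c e : ℂ) :
    (a • (1 : Matrix (Fin d × Fin d) (Fin d × Fin d) ℂ) + b • Flip d) *
      (c • (1 : Matrix (Fin d × Fin d) (Fin d × Fin d) ℂ) + e • Flip d)
    = (a * c + b * e) • (1 : Matrix (Fin d × Fin d) (Fin d × Fin d) ℂ)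
      + (a * e + b * c) • Flip d := by
  simp only [add_mul, mul_add, smul_mul_assoc, mul_smul_comm, flip_mul_flip,
    mul_one, one_mul, smul_smul]
  module

lemma trace_combo (a b : ℂ) :
    (a • (1 : Matrix (Fin d × Fin d) (Fin d × Fin d) ℂ) + b • Flip d).trace
      = a * ((d : ℂ) * d) + b * d := by
  simp [Matrix.trace_add, Matrix.trace_smul, trace_one', trace_flip, smul_eq_mul]

lemma projSym_psd : (projSym d).PosSemidef := by
  apply psd_of_proj
  · rw [projSym, conjTranspose_smul, conjTranspose_add, conjTranspose_one, flip_conjTranspose]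
    congr 1
    simp
  · rw [projSym_comb, mul_combo]
    norm_num

lemma projAsym_psd : (projAsym d).PosSemidef := by
  apply psd_of_proj
  · rw [projAsym, conjTranspose_smul, conjTranspose_sub, conjTranspose_one, flip_conjTranspose]
    congr 1
    simp
  · rw [projAsym_comb, mul_combo]
    norm_num

lemma phi_psd (hd : d ≠ 0) : (Phi d).PosSemidef :=
  psd_of_proj phi_conjTranspose (phi_mul_phi hd)

lemma one_sub_phi_psd (hd : d ≠ 0) :
    ((1 : Matrix (Fin d × Fin d) (Fin d × Fin d) ℂ) - Phi d).PosSemidef := by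
  apply psd_of_proj
  · rw [conjTranspose_sub, conjTranspose_one, phi_conjTranspose]
  · rw [sub_mul, one_mul, mul_sub, mul_one, phi_mul_phi hd]
    abel

lemma wernerSym_comb (hd : 2 ≤ d) :
    wernerSym d = (1 / ((d : ℂ) * ((d : ℂ) + 1))) • (1 : Matrix (Fin d × Fin d) (Fin d × Fin d) ℂ)
      + (1 / ((d : ℂ) * ((d : ℂ) + 1))) • Flip d := by
  obtain ⟨h0, h1, h2⟩ := cast_ne_facts hd
  rw [wernerSym, projSym]
  match_scalars <;> (field_simp; try ring)

lemma wernerAsym_comb (hd : 2 ≤ d) :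
    wernerAsym d = (1 / ((d : ℂ) * ((d : ℂ) - 1))) • (1 : Matrix (Fin d × Fin d) (Fin d × Fin d) ℂ)
      + (-(1 / ((d : ℂ) * ((d : ℂ) - 1)))) • Flip d := by
  obtain ⟨h0, h1, h2⟩ := cast_ne_facts hd
  rw [wernerAsym, projAsym]
  match_scalars <;> (field_simp; try ring)

lemma mdMat_comb (hd : 2 ≤ d) :
    MdMat d = ((d : ℂ) / ((d : ℂ) + 1)) • (1 : Matrix (Fin d × Fin d) (Fin d × Fin d) ℂ)
      + (-(1 / ((d : ℂ) + 1))) • Flip d := by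
  obtain ⟨h0, h1, h2⟩ := cast_ne_facts hd
  rw [MdMat, projSym, projAsym]
  match_scalars <;> field_simp <;> ring

lemma trace_mdMat_wernerSym (hd : 2 ≤ d) :
    (MdMat d * wernerSym d).trace = ((d : ℂ) - 1) / ((d : ℂ) + 1) := by
  obtain ⟨h0, h1, h2⟩ := cast_ne_facts hd
  rw [mdMat_comb hd, wernerSym_comb hd, mul_combo, trace_combo]
  field_simp
  ring

lemma trace_mdMat_wernerAsym (hd : 2 ≤ d) :
    (MdMat d * wernerAsym d).trace = 1 := by
  obtain ⟨h0, h1, h2⟩ := cast_ne_facts hd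
  rw [mdMat_comb hd, wernerAsym_comb hd, mul_combo, trace_combo]
  field_simp
  ring

lemma trace_wernerSym (hd : 2 ≤ d) : (wernerSym d).trace = 1 := by
  obtain ⟨h0, h1, h2⟩ := cast_ne_facts hd
  rw [wernerSym_comb hd, trace_combo]
  field_simp

lemma trace_wernerAsym (hd : 2 ≤ d) : (wernerAsym d).trace = 1 := by
  obtain ⟨h0, h1, h2⟩ := cast_ne_facts hd
  rw [wernerAsym_comb hd, trace_combo]
  field_simp
  ring

lemma rd_facts (hd : 2 ≤ d) : (2:ℝ) ≤ (d:ℝ) := by exact_mod_cast hd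

lemma mdMat_psd (hd : 2 ≤ d) : (MdMat d).PosSemidef := by
  have hrd := rd_facts hd
  have hc : ((d:ℂ) - 1)/((d:ℂ) + 1) = ((((d:ℝ) - 1)/((d:ℝ) + 1) : ℝ) : ℂ) := by
    push_cast
    ring
  rw [MdMat, hc]
  exact (smul_psd (div_nonneg (by linarith) (by linarith)) projSym_psd).add projAsym_psd

lemma one_sub_mdMat (hd : 2 ≤ d) :
    (1 : Matrix (Fin d × Fin d) (Fin d × Fin d) ℂ) - MdMat d
      = ((2:ℂ)/((d:ℂ)+1)) • projSym d := by
  obtain ⟨h0, h1, h2⟩ := cast_ne_facts hd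
  rw [MdMat, projSym, projAsym]
  match_scalars <;> (field_simp; try ring)

lemma one_sub_mdMat_psd (hd : 2 ≤ d) :
    ((1 : Matrix (Fin d × Fin d) (Fin d × Fin d) ℂ) - MdMat d).PosSemidef := by
  have hrd := rd_facts hd
  have hc : (2:ℂ)/((d:ℂ) + 1) = (((2:ℝ)/((d:ℝ) + 1) : ℝ) : ℂ) := by
    push_cast
    ring
  rw [one_sub_mdMat hd, hc]
  exact smul_psd (div_nonneg (by linarith) (by linarith)) projSym_psd

lemma pt_mdMat (hd : 2 ≤ d) :
    pt (MdMat d) = ((d:ℂ)/((d:ℂ)+1)) • ((1 : Matrix (Fin d × Fin d) (Fin d × Fin d) ℂ) - Phi d) := by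
  rw [mdMat_comb hd, pt_add, pt_smul, pt_smul, pt_one, pt_flip (by omega)]
  match_scalars <;> ring

lemma pt_mdMat_psd (hd : 2 ≤ d) : (pt (MdMat d)).PosSemidef := by
  have hrd := rd_facts hd
  have hc : (d:ℂ)/((d:ℂ) + 1) = (((d:ℝ)/((d:ℝ) + 1) : ℝ) : ℂ) := by
    push_cast
    ring
  rw [pt_mdMat hd, hc]
  exact smul_psd (div_nonneg (by linarith) (by linarith)) (one_sub_phi_psd (by omega))

lemma one_sub_pt_mdMat (hd : 2 ≤ d) :
    (1 : Matrix (Fin d × Fin d) (Fin d × Fin d) ℂ) - pt (MdMat d)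
      = ((1:ℂ)/((d:ℂ)+1)) • (1 : Matrix (Fin d × Fin d) (Fin d × Fin d) ℂ)
        + ((d:ℂ)/((d:ℂ)+1)) • Phi d := by
  obtain ⟨h0, h1, h2⟩ := cast_ne_facts hd
  rw [pt_mdMat hd]
  match_scalars <;> (field_simp; try ring)

lemma one_sub_pt_mdMat_psd (hd : 2 ≤ d) :
    ((1 : Matrix (Fin d × Fin d) (Fin d × Fin d) ℂ) - pt (MdMat d)).PosSemidef := by
  have hrd := rd_facts hd
  have hc1 : (1:ℂ)/((d:ℂ) + 1) = (((1:ℝ)/((d:ℝ) + 1) : ℝ) : ℂ) := by push_cast; ring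
  have hc2 : (d:ℂ)/((d:ℂ) + 1) = (((d:ℝ)/((d:ℝ) + 1) : ℝ) : ℂ) := by push_cast; ring
  rw [one_sub_pt_mdMat hd, hc1, hc2]
  exact (smul_psd (div_nonneg (by linarith) (by linarith)) Matrix.PosSemidef.one).add
    (smul_psd (div_nonneg (by linarith) (by linarith)) (phi_psd (by omega)))

lemma pt_wernerSym (hd : 2 ≤ d) :
    pt (wernerSym d) = ((1:ℂ)/(d:ℂ)) • Phi d
      + ((1:ℂ)/((d:ℂ)*((d:ℂ)+1))) • ((1 : Matrix (Fin d × Fin d) (Fin d × Fin d) ℂ) - Phi d) := by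
  obtain ⟨h0, h1, h2⟩ := cast_ne_facts hd
  rw [wernerSym_comb hd, pt_add, pt_smul, pt_smul, pt_one, pt_flip (by omega)]
  match_scalars <;> (field_simp; try ring)

lemma pt_wernerAsym (hd : 2 ≤ d) :
    pt (wernerAsym d) = (-(1:ℂ)/(d:ℂ)) • Phi d
      + ((1:ℂ)/((d:ℂ)*((d:ℂ)-1))) • ((1 : Matrix (Fin d × Fin d) (Fin d × Fin d) ℂ) - Phi d) := by
  obtain ⟨h0, h1, h2⟩ := cast_ne_facts hd
  rw [wernerAsym_comb hd, pt_add, pt_smul, pt_smul, pt_one, pt_flip (by omega)]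
  match_scalars <;> (field_simp; try ring)

lemma tpow_comb (x y : ℂ) (A B : Matrix (Fin d × Fin d) (Fin d × Fin d) ℂ) :
    tpow n (x • A + y • B)
      = ∑ S ∈ (Finset.univ : Finset (Fin n)).powerset,
          (x ^ S.card * y ^ Sᶜ.card) • pm (fun m => if m ∈ S then A else B) := by
  ext f g
  simp only [tpow, of_apply, Matrix.sum_apply, Matrix.smul_apply, pm_apply,
    Matrix.add_apply, smul_eq_mul]
  rw [Finset.prod_add]
  apply Finset.sum_congr rfl
  intro S hS
  have h1 : ∏ m ∈ S, (x * A (f m) (g m)) = x ^ S.card * ∏ m ∈ S, A (f m) (g m) := by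
    rw [Finset.prod_mul_distrib, Finset.prod_const]
  have h2 : ∏ m ∈ Finset.univ \ S, (y * B (f m) (g m))
      = y ^ Sᶜ.card * ∏ m ∈ Sᶜ, B (f m) (g m) := by
    rw [← Finset.compl_eq_univ_sdiff, Finset.prod_mul_distrib, Finset.prod_const]
  rw [h1, h2]
  have h3 : ∏ m : Fin n, (if m ∈ S then A else B) (f m) (g m)
      = (∏ m ∈ S, A (f m) (g m)) * ∏ m ∈ Sᶜ, B (f m) (g m) := by
    rw [← Finset.prod_mul_prod_compl S]
    congr 1
    · exact Finset.prod_congr rfl (fun m hm => by simp [hm])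
    · exact Finset.prod_congr rfl (fun m hm => by simp [Finset.mem_compl.mp hm])
  rw [h3]
  ring

lemma coeff_nonneg_real {r : ℝ} (hr : 2 ≤ r) (k j : ℕ) :
    0 ≤ ((r+1)/(r-1))^(k+j) * ((1/r)^k * (1/(r*(r+1)))^j) - ((-1/r)^k * (1/(r*(r-1)))^j) := by
  have h0 : r ≠ 0 := by linarith
  have h1 : r + 1 ≠ 0 := by linarith
  have h2 : r - 1 ≠ 0 := by linarith
  have h3 : (-1/r)^k = (-1:ℝ)^k/r^k := by rw [div_pow]
  have heq : ((r+1)/(r-1))^(k+j) * ((1/r)^k * (1/(r*(r+1)))^j) - ((-1/r)^k * (1/(r*(r-1)))^j)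
      = ((r+1)^k - (-1)^k * (r-1)^k) * (1/(r*(r-1)))^(k+j) := by
    simp only [div_pow, mul_pow, one_pow, pow_add, h3]
    field_simp
  rw [heq]
  apply mul_nonneg
  · rcases Nat.even_or_odd k with he | ho
    · rw [he.neg_one_pow, one_mul, sub_nonneg]
      exact pow_le_pow_left₀ (by linarith) (by linarith) k
    · rw [ho.neg_one_pow]
      have : (0:ℝ) ≤ (r-1)^k := pow_nonneg (by linarith) k
      have : (0:ℝ) ≤ (r+1)^k := pow_nonneg (by linarith) k
      nlinarith [pow_nonneg (show (0:ℝ) ≤ r - 1 by linarith) k]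
  · apply pow_nonneg
    have hpos : 0 < r * (r - 1) := by nlinarith
    positivity

lemma key_psd (hd : 2 ≤ d) :
    (((((((d:ℝ)+1)/((d:ℝ)-1))^n : ℝ)) : ℂ) • tpow n (pt (wernerSym d))
      - tpow n (pt (wernerAsym d))).PosSemidef := by
  have hr : (2:ℝ) ≤ (d:ℝ) := rd_facts hd
  rw [pt_wernerSym hd, pt_wernerAsym hd, tpow_comb, tpow_comb, Finset.smul_sum,
    ← Finset.sum_sub_distrib]
  apply sum_psd
  intro S hS
  rw [smul_smul, ← sub_smul]
  have hkj : S.card + Sᶜ.card = n := by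
    rw [Finset.card_add_card_compl]
    simp
  set k := S.card
  set j := Sᶜ.card
  have hcast : (((((d:ℝ)+1)/((d:ℝ)-1))^n : ℝ) : ℂ) * ((1/(d:ℂ))^k * (1/((d:ℂ)*((d:ℂ)+1)))^j)
        - ((-1/(d:ℂ))^k * (1/((d:ℂ)*((d:ℂ)-1)))^j)
      = (((((d:ℝ)+1)/((d:ℝ)-1))^n * ((1/(d:ℝ))^k * (1/((d:ℝ)*((d:ℝ)+1)))^j)
          - ((-1/(d:ℝ))^k * (1/((d:ℝ)*((d:ℝ)-1)))^j) : ℝ) : ℂ) := by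
    push_cast
    ring
  rw [hcast]
  apply smul_psd
  · rw [← hkj]
    exact coeff_nonneg_real hr k j
  · apply pm_psd
    intro m
    by_cases h : m ∈ S
    · simp only [h, if_true]
      exact phi_psd (by omega)
    · simp only [h, if_false]
      exact one_sub_phi_psd (by omega)


lemma wernerSym_psd (hd : 2 ≤ d) : (wernerSym d).PosSemidef := by
  have hr := rd_facts hd
  have hc : (2:ℂ)/((d:ℂ) * ((d:ℂ)+1)) = (((2:ℝ)/((d:ℝ)*((d:ℝ)+1)) : ℝ) : ℂ) := by
    push_cast
    ring
  rw [wernerSym, hc]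
  exact smul_psd (div_nonneg (by norm_num) (by nlinarith)) projSym_psd

lemma wernerAsym_psd (hd : 2 ≤ d) : (wernerAsym d).PosSemidef := by
  have hr := rd_facts hd
  have hc : (2:ℂ)/((d:ℂ) * ((d:ℂ)-1)) = (((2:ℝ)/((d:ℝ)*((d:ℝ)-1)) : ℝ) : ℂ) := by
    push_cast
    ring
  rw [wernerAsym, hc]
  exact smul_psd (div_nonneg (by norm_num) (by nlinarith)) projAsym_psd

lemma trace_tpow (X : Matrix (Fin d × Fin d) (Fin d × Fin d) ℂ) :
    (tpow n X).trace = X.trace ^ n := by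
  rw [tpow_eq_pm, pm_trace]
  simp

lemma ppt_mdpow (hd : 2 ≤ d) : IsPPTPovmElem (tpow n (MdMat d) :
    Matrix (Fin n → Fin d × Fin d) (Fin n → Fin d × Fin d) ℂ) := by
  refine ⟨?_, ?_, ?_, ?_⟩
  · rw [tpow_eq_pm]
    exact pm_psd fun _ => mdMat_psd hd
  · exact one_sub_tpow_psd (mdMat_psd hd) (one_sub_mdMat_psd hd)
  · rw [ptN_tpow, tpow_eq_pm]
    exact pm_psd fun _ => pt_mdMat_psd hd
  · rw [ptN_sub, ptN_one, ptN_tpow]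
    exact one_sub_tpow_psd (pt_mdMat_psd hd) (one_sub_pt_mdMat_psd hd)

lemma errProb_mdpow (hd : 2 ≤ d) (p : ℝ) :
    errProb d n p (tpow n (MdMat d)) = p * ((((d:ℝ)-1)/((d:ℝ)+1))) ^ n := by
  have hmul1 : tpow n (MdMat d) * tpow n (wernerSym d) = tpow n (MdMat d * wernerSym d) := by
    rw [tpow_eq_pm, tpow_eq_pm, pm_mul]
    rfl
  have hmul2 : tpow n (MdMat d) * tpow n (wernerAsym d) = tpow n (MdMat d * wernerAsym d) := by
    rw [tpow_eq_pm, tpow_eq_pm, pm_mul]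
    rfl
  have hsub : ((1 : Matrix (Fin n → Fin d × Fin d) (Fin n → Fin d × Fin d) ℂ)
      - tpow n (MdMat d)) * tpow n (wernerAsym d)
      = tpow n (wernerAsym d) - tpow n (MdMat d) * tpow n (wernerAsym d) := by
    rw [sub_mul, one_mul]
  rw [errProb, hmul1, hsub, trace_sub, hmul2, trace_tpow, trace_tpow, trace_tpow,
    trace_mdMat_wernerSym hd, trace_mdMat_wernerAsym hd, trace_wernerAsym hd]
  have hlamc : (((d:ℂ) - 1)/((d:ℂ) + 1)) = (((((d:ℝ)-1)/((d:ℝ)+1)) : ℝ) : ℂ) := by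
    push_cast
    ring
  rw [hlamc]
  simp only [one_pow, sub_self, mul_zero, add_zero, ← Complex.ofReal_pow,
    ← Complex.ofReal_mul, Complex.ofReal_re]

lemma errProb_lower (hd : 2 ≤ d) {p : ℝ} (hp0 : 0 < p) (hp1 : p < 1) {n : ℕ}
    (hn : p * ((((d:ℝ)-1)/((d:ℝ)+1))) ^ n ≤ 1 - p)
    (E : Matrix (Fin n → Fin d × Fin d) (Fin n → Fin d × Fin d) ℂ)
    (hE : IsPPTPovmElem E) :
    p * ((((d:ℝ)-1)/((d:ℝ)+1))) ^ n ≤ errProb d n p E := by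
  obtain ⟨hE1, hE2, hE3, hE4⟩ := hE
  have hr := rd_facts hd
  set lam : ℝ := (((d:ℝ)-1)/((d:ℝ)+1)) with hlam
  set kap : ℝ := (((d:ℝ)+1)/((d:ℝ)-1)) ^ n with hkap
  have hlam0 : 0 < lam := div_pos (by linarith) (by linarith)
  have hkl : lam ^ n * kap = 1 := by
    rw [hkap, hlam, ← mul_pow]
    have : ((d:ℝ)-1)/((d:ℝ)+1) * (((d:ℝ)+1)/((d:ℝ)-1)) = 1 := by
      have hne1 : (d:ℝ)+1 ≠ 0 := by linarith
      have hne2 : (d:ℝ)-1 ≠ 0 := by linarith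
      field_simp
    rw [this, one_pow]
  set s : ℂ := (E * tpow n (wernerSym d)).trace with hs
  set a : ℂ := (E * tpow n (wernerAsym d)).trace with ha
  have hσpsd : (tpow n (wernerSym d)).PosSemidef := by
    rw [tpow_eq_pm]; exact pm_psd fun _ => wernerSym_psd hd
  have hαpsd : (tpow n (wernerAsym d)).PosSemidef := by
    rw [tpow_eq_pm]; exact pm_psd fun _ => wernerAsym_psd hd
  have hs_nonneg : 0 ≤ s.re := trace_mul_psd_re_nonneg hE1 hσpsd
  have ha_nonneg : 0 ≤ a.re := trace_mul_psd_re_nonneg hE1 hαpsd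
  have hone_sub : ((1 - E) * tpow n (wernerAsym d)).trace = 1 - a := by
    rw [sub_mul, one_mul, trace_sub, trace_tpow, trace_wernerAsym hd, one_pow, ha]
  have ha_le_one : a.re ≤ 1 := by
    have h := trace_mul_psd_re_nonneg hE2 hαpsd
    rw [hone_sub] at h
    simp only [Complex.sub_re, Complex.one_re] at h
    linarith
  -- key PPT inequality
  have hrel : a.re ≤ kap * s.re := by
    have hX := key_psd (n := n) hd
    have h := trace_mul_psd_re_nonneg hE3 hX
    have hexp : ptN E * (((kap : ℝ) : ℂ) • tpow n (pt (wernerSym d)) - tpow n (pt (wernerAsym d)))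
        = ((kap : ℝ) : ℂ) • (ptN E * ptN (tpow n (wernerSym d)))
          - ptN E * ptN (tpow n (wernerAsym d)) := by
      rw [mul_sub, mul_smul_comm, ptN_tpow, ptN_tpow]
    rw [hexp, trace_sub, trace_smul, trace_ptN_mul, trace_ptN_mul, ← hs, ← ha] at h
    simp only [Complex.sub_re, smul_eq_mul, Complex.re_ofReal_mul] at h
    linarith
  have herr : errProb d n p E = p * s.re + (1 - p) * (1 - a.re) := by
    rw [errProb, hone_sub, ← hs]
    have hcast : (1 : ℂ) - (p : ℂ) = ((1 - p : ℝ) : ℂ) := by push_cast; ring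
    rw [hcast]
    simp [Complex.add_re, Complex.re_ofReal_mul, Complex.sub_re, Complex.one_re]
    try ring
  rw [herr]
  have t1 : p * (lam ^ n * a.re) ≤ p * s.re := by
    apply mul_le_mul_of_nonneg_left _ hp0.le
    calc lam ^ n * a.re ≤ lam ^ n * (kap * s.re) := by
          apply mul_le_mul_of_nonneg_left hrel (pow_nonneg hlam0.le n)
      _ = s.re := by rw [← mul_assoc, hkl, one_mul]
  have t2 : p * lam ^ n * (1 - a.re) ≤ (1 - p) * (1 - a.re) :=
    mul_le_mul_of_nonneg_right hn (by linarith)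
  nlinarith [t1, t2]

end ChernoffAux

/-- the PPT (hence LOCC) Chernoff distance between `σ_d` and `α_d`
is `log((d+1)/(d−1))`. -/
theorem ppt_chernoff_distance (d : ℕ) (hd : 2 ≤ d) (p : ℝ) (hp0 : 0 < p) (hp1 : p < 1) :
    Filter.Tendsto
      (fun n : ℕ =>
        -(1 / (n : ℝ)) * Real.log (sInf { x : ℝ |
          ∃ E : Matrix (Fin n → Fin d × Fin d) (Fin n → Fin d × Fin d) ℂ,
            IsPPTPovmElem E ∧ x = errProb d n p E }))
      Filter.atTop (nhds (Real.log (((d : ℝ) + 1) / ((d : ℝ) - 1)))) := by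
  classical
  have hr : (2:ℝ) ≤ (d:ℝ) := by exact_mod_cast hd
  set lam : ℝ := ((d:ℝ)-1)/((d:ℝ)+1) with hlam
  have hlam0 : 0 < lam := div_pos (by linarith) (by linarith)
  have hlam1 : lam < 1 := by
    rw [hlam, div_lt_one (by linarith)]
    linarith
  have hmem : ∀ n : ℕ, p * lam ^ n ∈ { x : ℝ |
      ∃ E : Matrix (Fin n → Fin d × Fin d) (Fin n → Fin d × Fin d) ℂ,
        IsPPTPovmElem E ∧ x = errProb d n p E } :=
    fun n => ⟨tpow n (MdMat d), ChernoffAux.ppt_mdpow hd,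
      (ChernoffAux.errProb_mdpow hd p).symm⟩
  have hinf : ∀ n : ℕ, p * lam ^ n ≤ 1 - p → sInf { x : ℝ |
      ∃ E : Matrix (Fin n → Fin d × Fin d) (Fin n → Fin d × Fin d) ℂ,
        IsPPTPovmElem E ∧ x = errProb d n p E } = p * lam ^ n := by
    intro n hn
    apply le_antisymm
    · refine csInf_le ⟨p * lam ^ n, fun x hx => ?_⟩ (hmem n)
      obtain ⟨E, hE, rfl⟩ := hx
      exact ChernoffAux.errProb_lower hd hp0 hp1 hn E hE
    · refine le_csInf ⟨_, hmem n⟩ (fun x hx => ?_)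
      obtain ⟨E, hE, rfl⟩ := hx
      exact ChernoffAux.errProb_lower hd hp0 hp1 hn E hE
  have hev : ∀ᶠ n : ℕ in Filter.atTop, p * lam ^ n ≤ 1 - p := by
    have h1 : Filter.Tendsto (fun n : ℕ => p * lam ^ n) Filter.atTop (nhds (p * 0)) :=
      (tendsto_pow_atTop_nhds_zero_of_lt_one hlam0.le hlam1).const_mul p
    rw [mul_zero] at h1
    have h2 : ∀ᶠ n : ℕ in Filter.atTop, p * lam ^ n < 1 - p :=
      h1.eventually_lt_const (by linarith)
    exact h2.mono fun n hn => hn.le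
  have heq : (fun n : ℕ => -(Real.log p)/(n:ℝ) - Real.log lam) =ᶠ[Filter.atTop]
      (fun n : ℕ => -(1 / (n : ℝ)) * Real.log (sInf { x : ℝ |
        ∃ E : Matrix (Fin n → Fin d × Fin d) (Fin n → Fin d × Fin d) ℂ,
          IsPPTPovmElem E ∧ x = errProb d n p E })) := by
    filter_upwards [hev, Filter.eventually_ge_atTop 1] with n h1 h2
    rw [hinf n h1, Real.log_mul (ne_of_gt hp0) (pow_ne_zero n (ne_of_gt hlam0)), Real.log_pow]
    have hn0 : (n:ℝ) ≠ 0 := Nat.cast_ne_zero.mpr (by omega)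
    field_simp
    ring
  have hlim : Filter.Tendsto (fun n : ℕ => -(Real.log p)/(n:ℝ) - Real.log lam)
      Filter.atTop (nhds (0 - Real.log lam)) :=
    (tendsto_const_div_atTop_nhds_zero_nat (-(Real.log p))).sub_const _
  have hgoal : Real.log (((d : ℝ) + 1) / ((d : ℝ) - 1)) = 0 - Real.log lam := by
    rw [hlam, Real.log_div (by linarith : (d:ℝ)+1 ≠ 0) (by linarith : (d:ℝ)-1 ≠ 0),
      Real.log_div (by linarith : (d:ℝ)-1 ≠ 0) (by linarith : (d:ℝ)+1 ≠ 0)]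
    ring
  rw [hgoal]
  exact Filter.Tendsto.congr' heq hlim

end
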